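/- Linear convergence of ALI-G for strongly convex smooth losses with small η: suppose Ω convex, each ℓ_z is α-strongly convex, β-smooth, non-negative, ℓ_z(w_⋆) ≤ ε for all z, δ > 2βε, and 0 < η ≤ 1/(2β). Then the ALI-G iterates satisfy E[f(w_{T+1})] - f_⋆ ≤ β·exp(-αηT/2)·‖w₀ - w_⋆‖² + δ/α + 4εβ/α. -/

import Mathlib

open RealInnerProductSpace MeasureTheory ProbabilityTheory Filter Set

section Aux
variable {E : Type*} [NormedAddCommGroup E] [InnerProductSpace ℝ E]

/-- Closest-point projection onto a convex set is nonexpansive toward points of the set. -/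
lemma alig_proj_aux {K : Set E} (hK : Convex ℝ K) {x p y : E} (hp : p ∈ K) (hy : y ∈ K)
    (hmin : ∀ z ∈ K, ‖x - p‖ ≤ ‖x - z‖) : ‖p - y‖ ≤ ‖x - y‖ := by
  have hin : ⟪x - p, y - p⟫ ≤ 0 := by
    by_contra h
    push_neg at h
    have hyp : y - p ≠ 0 := by
      intro h0
      rw [h0, inner_zero_right] at h
      exact lt_irrefl _ h
    have hnorm : (0:ℝ) < ‖y - p‖ ^ 2 :=
      pow_pos (norm_pos_iff.mpr hyp) 2
    set c : ℝ := ⟪x - p, y - p⟫ with hc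
    set t : ℝ := min 1 (c / ‖y - p‖ ^ 2) with ht
    have ht0 : 0 < t := lt_min one_pos (div_pos h hnorm)
    have ht1 : t ≤ 1 := min_le_left _ _
    have hz : p + t • (y - p) ∈ K := by
      have h2 := hK hp hy (by linarith : (0:ℝ) ≤ 1 - t) ht0.le (by ring)
      have : (1 - t) • p + t • y = p + t • (y - p) := by
        rw [smul_sub, sub_smul, one_smul]; abel
      rwa [this] at h2
    have h2 := hmin _ hz
    have hsq : ‖x - p‖ ^ 2 ≤ ‖(x - p) - t • (y - p)‖ ^ 2 := by
      have hxy : x - (p + t • (y - p)) = (x - p) - t • (y - p) := by abel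
      rw [← hxy]
      exact pow_le_pow_left₀ (norm_nonneg _) h2 2
    have hexp2 := norm_sub_sq_real (x - p) (t • (y - p))
    rw [real_inner_smul_right, norm_smul, mul_pow, Real.norm_eq_abs, sq_abs] at hexp2
    rw [hexp2] at hsq
    have htc : t * ‖y - p‖ ^ 2 ≤ c := by
      calc t * ‖y - p‖ ^ 2 ≤ (c / ‖y - p‖ ^ 2) * ‖y - p‖ ^ 2 :=
            mul_le_mul_of_nonneg_right (min_le_right _ _) hnorm.le
        _ = c := div_mul_cancel₀ _ (ne_of_gt hnorm)
    nlinarith [sq_nonneg t, ht0]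
  have hexp : ‖x - y‖ ^ 2 = ‖x - p‖ ^ 2 - 2 * ⟪x - p, y - p⟫ + ‖y - p‖ ^ 2 := by
    have : x - y = (x - p) - (y - p) := by abel
    rw [this, norm_sub_sq_real]
  have : ‖p - y‖ ^ 2 ≤ ‖x - y‖ ^ 2 := by
    have hpy : ‖p - y‖ = ‖y - p‖ := norm_sub_rev _ _
    rw [hpy]
    nlinarith [sq_nonneg ‖x - p‖]
  exact le_of_pow_le_pow_left₀ two_ne_zero (norm_nonneg _) this

end Aux

section Aux2
variable {E : Type*} [NormedAddCommGroup E] [InnerProductSpace ℝ E] [CompleteSpace E]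

/-- Descent lemma for a function with β-Lipschitz gradient. -/
lemma alig_descent {φ : E → ℝ} {g : E → E} {β : ℝ} (hβ : 0 < β)
    (hgrad : ∀ x, HasGradientAt φ (g x) x)
    (hlip : ∀ u v, ‖g u - g v‖ ≤ β * ‖u - v‖) (u v : E) :
    φ u ≤ φ v + ⟪g v, u - v⟫ + β / 2 * ‖u - v‖ ^ 2 := by
  set d : E := u - v with hd
  -- curve and auxiliary 1-D function
  set c : ℝ → E := fun t => v + t • d with hcurve
  have hc : ∀ t : ℝ, HasDerivAt c d t := by
    intro t
    have h1 : HasDerivAt (fun t : ℝ => t • d) ((1:ℝ) • d) t :=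
      (hasDerivAt_id t).smul_const d
    have h2 := h1.const_add v
    rw [one_smul] at h2
    exact h2
  set ψ : ℝ → ℝ := fun t => φ (c t) - t * ⟪g v, d⟫ - β / 2 * t ^ 2 * ‖d‖ ^ 2 with hψdef
  have hψ : ∀ t : ℝ, HasDerivAt ψ (⟪g (c t), d⟫ - ⟪g v, d⟫ - β * t * ‖d‖ ^ 2) t := by
    intro t
    have h1 : HasDerivAt (fun t : ℝ => φ (c t)) (⟪g (c t), d⟫) t := by
      have h2 := (hgrad (c t)).hasFDerivAt.comp_hasDerivAt t (hc t)
      simp [InnerProductSpace.toDual_apply_apply] at h2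
      exact h2
    have h3 : HasDerivAt (fun t : ℝ => t * ⟪g v, d⟫) (⟪g v, d⟫) t := by
      simpa using (hasDerivAt_id t).mul_const (⟪g v, d⟫)
    have h4 : HasDerivAt (fun t : ℝ => β / 2 * t ^ 2 * ‖d‖ ^ 2) (β * t * ‖d‖ ^ 2) t := by
      have h5 : HasDerivAt (fun t : ℝ => t ^ 2) (2 * t) t := by
        simpa using hasDerivAt_pow 2 t
      have h6 := (h5.const_mul (β / 2)).mul_const (‖d‖ ^ 2)
      have h7 : β * t * ‖d‖ ^ 2 = β / 2 * (2 * t) * ‖d‖ ^ 2 := by ring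
      rw [h7]
      exact h6
    have h8 := (h1.sub h3).sub h4
    exact h8
  have hmvt := exists_hasDerivAt_eq_slope ψ
      (fun t => ⟪g (c t), d⟫ - ⟪g v, d⟫ - β * t * ‖d‖ ^ 2) one_pos
      (fun t _ => (hψ t).continuousAt.continuousWithinAt)
      (fun t _ => hψ t)
  obtain ⟨s, hs, hslope⟩ := hmvt
  have hs0 : 0 < s := hs.1
  have hs1 : s < 1 := hs.2
  have hder : ⟪g (c s), d⟫ - ⟪g v, d⟫ - β * s * ‖d‖ ^ 2 ≤ 0 := by
    have h7 : ⟪g (c s) - g v, d⟫ ≤ ‖g (c s) - g v‖ * ‖d‖ := real_inner_le_norm _ _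
    have h8 : ‖g (c s) - g v‖ ≤ β * ‖c s - v‖ := hlip _ _
    have h9 : c s - v = s • d := by simp [hcurve]
    have h10 : ‖c s - v‖ = s * ‖d‖ := by
      rw [h9, norm_smul, Real.norm_eq_abs, abs_of_pos hs0]
    have h11 : ⟪g (c s) - g v, d⟫ = ⟪g (c s), d⟫ - ⟪g v, d⟫ := by
      rw [inner_sub_left]
    have h12 : ⟪g (c s), d⟫ - ⟪g v, d⟫ ≤ β * (s * ‖d‖) * ‖d‖ := by
      rw [← h11]
      calc ⟪g (c s) - g v, d⟫ ≤ ‖g (c s) - g v‖ * ‖d‖ := h7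
        _ ≤ (β * ‖c s - v‖) * ‖d‖ := mul_le_mul_of_nonneg_right h8 (norm_nonneg d)
        _ = β * (s * ‖d‖) * ‖d‖ := by rw [h10]
    nlinarith [h12]
  have hψ1 : ψ 1 - ψ 0 ≤ 0 := by
    have hsl : ⟪g (c s), d⟫ - ⟪g v, d⟫ - β * s * ‖d‖ ^ 2 = (ψ 1 - ψ 0) / (1 - 0) := hslope
    rw [show ((1:ℝ) - 0) = 1 by ring, div_one] at hsl
    linarith [hder, hsl.symm.le, hsl.le]
  have hc0 : c 0 = v := by simp [hcurve]
  have hc1 : c 1 = u := by simp [hcurve, hd]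
  have := hψ1
  simp only [hψdef, hc0, hc1] at this
  nlinarith [this]

end Aux2

/-- Key algebraic inequality (B). -/
lemma alig_B {β δ ε η L sL sP : ℝ} (hβ : 0 < β) (hδ0 : 0 < δ) (hδε : 2*β*ε ≤ δ)
    (hη0 : 0 < η) (hηβ : 2*β*η ≤ 1) (hL0 : 0 ≤ L) (hsL0 : 0 ≤ sL) (hsP0 : 0 ≤ sP)
    (hsL2 : sL^2 = L) (hsP2 : sP^2 = ε) :
    2*(η*δ)*(sL*sP) ≤ 2*L*(sL*sP) + η*δ^2/(2*β) + 2*L^2 := by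
  have hηδ0 : (0:ℝ) ≤ η*δ := mul_nonneg hη0.le hδ0.le
  rcases le_or_gt sP (2*sL) with hc | hc
  · have t1 : 2*(η*δ)*(sL*sP) ≤ (η*δ)^2 + (sL*sP)^2 := by
      nlinarith [sq_nonneg (η*δ - sL*sP)]
    have t2 : (η*δ)^2 ≤ η*δ^2/(2*β) := by
      rw [le_div_iff₀ (by linarith : (0:ℝ) < 2*β)]
      have h6 : 0 ≤ (1 - 2*β*η)*(η*δ^2) :=
        mul_nonneg (by linarith) (mul_nonneg hη0.le (sq_nonneg δ))
      nlinarith [h6]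
    have t3 : (sL*sP)^2 ≤ 2*L*(sL*sP) := by
      rw [← hsL2]
      have h7 : (sL*sL*sP)*sP ≤ (sL*sL*sP)*(2*sL) :=
        mul_le_mul_of_nonneg_left hc (mul_nonneg (mul_nonneg hsL0 hsL0) hsP0)
      nlinarith [h7]
    nlinarith [t1, t2, t3, sq_nonneg L]
  · have hss : 2*sL*sP ≤ ε := by
      rw [← hsP2]
      nlinarith [mul_le_mul_of_nonneg_right hc.le hsP0]
    have t1 : 2*(η*δ)*(sL*sP) ≤ η*δ*ε := by
      have := mul_le_mul_of_nonneg_left hss hηδ0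
      nlinarith [this]
    have t2 : η*δ*ε ≤ η*δ^2/(2*β) := by
      rw [le_div_iff₀ (by linarith : (0:ℝ) < 2*β)]
      have := mul_le_mul_of_nonneg_left hδε hηδ0
      nlinarith [this]
    nlinarith [t1, t2, mul_nonneg (mul_nonneg hL0 hsL0) hsP0, sq_nonneg L]

/-- CORE inequality. -/
lemma alig_CORE {β δ ε η L sL sP : ℝ} (hβ : 0 < β) (hδ0 : 0 < δ) (hδε : 2*β*ε ≤ δ)
    (hη0 : 0 < η) (hηβ : 2*β*η ≤ 1) (hL0 : 0 ≤ L) (hsL0 : 0 ≤ sL) (hsP0 : 0 ≤ sP)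
    (hsL2 : sL^2 = L) (hsP2 : sP^2 = ε) :
    (η - 2*(L/(2*β*L + δ)))*(L + 2*sL*sP) ≤ (L/(2*β*L + δ))*L + η*δ/(2*β) := by
  obtain ⟨D, hD⟩ : ∃ D : ℝ, D = 2*β*L + δ := ⟨_, rfl⟩
  rw [← hD]
  have hD0 : (0:ℝ) < D := by rw [hD]; nlinarith [mul_nonneg hβ.le hL0]
  have hγ₀D : (L/D) * D = L := div_mul_cancel₀ _ (ne_of_gt hD0)
  have hX0 : (0:ℝ) ≤ L + 2*sL*sP := by nlinarith [mul_nonneg hsL0 hsP0]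
  have hstep1 : η*D - 2*L ≤ η*δ - L := by
    have h5 : 0 ≤ (1 - 2*β*η)*L := mul_nonneg (by linarith) hL0
    rw [hD]; nlinarith [h5]
  have e1 : (η*D - 2*L)*(L + 2*sL*sP)
      ≤ η*δ*L + 2*(η*δ)*(sL*sP) - L^2 - 2*L*(sL*sP) := by
    calc (η*D - 2*L)*(L + 2*sL*sP) ≤ (η*δ - L)*(L + 2*sL*sP) :=
          mul_le_mul_of_nonneg_right hstep1 hX0
      _ = η*δ*L + 2*(η*δ)*(sL*sP) - L^2 - 2*L*(sL*sP) := by ring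
  have e3 : η*δ*D/(2*β) = η*δ*L + η*δ^2/(2*β) := by
    rw [hD]; field_simp
  have hB := alig_B hβ hδ0 hδε hη0 hηβ hL0 hsL0 hsP0 hsL2 hsP2
  have hP : (η*D - 2*L)*(L + 2*sL*sP) ≤ L^2 + η*δ*D/(2*β) := by
    rw [e3]; linarith [hB, e1]
  rw [← mul_le_mul_iff_of_pos_right hD0]
  have e4 : (η - 2*(L/D))*(L + 2*sL*sP)*D = (η*D - 2*L)*(L + 2*sL*sP) := by
    linear_combination (-2*(L + 2*sL*sP))*hγ₀D
  have e5 : ((L/D)*L + η*δ/(2*β))*D = L^2 + η*δ*D/(2*β) := by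
    linear_combination L*hγ₀D
  rw [e4, e5]; exact hP

set_option maxHeartbeats 1000000 in
lemma alig_step_scalar (α β δ ε η r ℓv e m G s γ : ℝ)
    (hα : 0 < α) (hβ : 0 < β) (hε : 0 ≤ ε) (hδε : 2*β*ε ≤ δ) (hδ0 : 0 < δ)
    (hη0 : 0 < η) (hηβ : 2*β*η ≤ 1)
    (hm0 : 0 ≤ m) (hme : m ≤ e) (heε : e ≤ ε) (hmℓ : m ≤ ℓv)
    (hG0 : 0 ≤ G) (hGle : G ≤ 2*β*(ℓv - m))
    (hr0 : 0 ≤ r)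
    (hrle : α/2*r ≤ (ℓv - m) + (e - m) + 2*Real.sqrt (ℓv-m)*Real.sqrt (e-m))
    (hs : ℓv - e + α/2*r ≤ s)
    (hγ : γ = min (ℓv/(G+δ)) η) :
    r - 2*γ*s + γ^2*G ≤ (1-α*η/2)*r + η*δ/(2*β) + η*ε := by
  have hℓ0 : 0 ≤ ℓv := le_trans hm0 hmℓ
  have he0 : 0 ≤ e := le_trans hm0 hme
  have hGδ : 0 < G + δ := by linarith
  have hγ0 : 0 ≤ γ := by
    rw [hγ]; exact le_min (div_nonneg hℓ0 hGδ.le) hη0.le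
  have hγη : γ ≤ η := by rw [hγ]; exact min_le_right _ _
  have hγa : γ ≤ ℓv/(G+δ) := by rw [hγ]; exact min_le_left _ _
  have hγGδ : γ * (G+δ) ≤ ℓv := by
    have := mul_le_mul_of_nonneg_right hγa hGδ.le
    rwa [div_mul_cancel₀ _ (ne_of_gt hGδ)] at this
  have hγG : γ * G ≤ ℓv := by linarith [mul_nonneg hγ0 hδ0.le]
  have key1 : γ^2*G ≤ γ*ℓv := by
    have h0 : γ * (γ * G) ≤ γ * ℓv := mul_le_mul_of_nonneg_left hγG hγ0
    linarith [h0]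
  have key2 : r - 2*γ*s + γ^2*G ≤ (1-α*γ)*r - γ*ℓv + 2*γ*e := by
    have h1 := mul_le_mul_of_nonneg_left hs (by linarith : (0:ℝ) ≤ 2*γ)
    linarith [key1, h1]
  have main : (1-α*γ)*r - γ*ℓv + 2*γ*e ≤ (1-α*η/2)*r + η*δ/(2*β) + η*ε := by
    rcases le_or_gt η (2*γ) with h1 | h2
    · have hb1 : α*(η/2)*r ≤ α*γ*r := by
        have := mul_le_mul_of_nonneg_left (show η/2 ≤ γ by linarith)
          (mul_nonneg hα.le hr0)
        linarith [this]
      have h3 : 2*γ*e ≤ 2*η*ε := by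
        have := mul_le_mul hγη heε he0 hη0.le
        linarith
      have h4 : η*ε ≤ η*δ/(2*β) := by
        rw [le_div_iff₀ (by linarith : (0:ℝ) < 2*β)]
        have := mul_le_mul_of_nonneg_left hδε hη0.le
        linarith
      linarith [mul_nonneg hγ0 hℓ0, hb1, h3, h4]
    · have hγeq : γ = ℓv/(G+δ) := by
        rcases min_cases (ℓv/(G+δ)) η with ⟨h3, _⟩ | ⟨h3, h4⟩
        · rw [hγ, h3]
        · rw [hγ, h3] at h2 ⊢; linarith
      obtain ⟨L, hLdef⟩ : ∃ L : ℝ, L = ℓv - m := ⟨_, rfl⟩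
      obtain ⟨Ev, hEdef⟩ : ∃ Ev : ℝ, Ev = e - m := ⟨_, rfl⟩
      have hL0 : 0 ≤ L := by rw [hLdef]; linarith
      have hE0 : 0 ≤ Ev := by rw [hEdef]; linarith
      obtain ⟨sL, hsLdef⟩ : ∃ x : ℝ, x = Real.sqrt L := ⟨_, rfl⟩
      obtain ⟨sE, hsEdef⟩ : ∃ x : ℝ, x = Real.sqrt Ev := ⟨_, rfl⟩
      obtain ⟨sP, hsPdef⟩ : ∃ x : ℝ, x = Real.sqrt ε := ⟨_, rfl⟩
      have hsL0 : 0 ≤ sL := hsLdef ▸ Real.sqrt_nonneg _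
      have hsE0 : 0 ≤ sE := hsEdef ▸ Real.sqrt_nonneg _
      have hsP0 : 0 ≤ sP := hsPdef ▸ Real.sqrt_nonneg _
      have hsL2 : sL^2 = L := by rw [hsLdef]; exact Real.sq_sqrt hL0
      have hsE2 : sE^2 = Ev := by rw [hsEdef]; exact Real.sq_sqrt hE0
      have hsP2 : sP^2 = ε := by rw [hsPdef]; exact Real.sq_sqrt hε
      have hEε : Ev ≤ ε := by rw [hEdef]; linarith
      have hsEsP : sE ≤ sP := by
        rw [hsEdef, hsPdef]; exact Real.sqrt_le_sqrt hEε
      obtain ⟨D, hD⟩ : ∃ D : ℝ, D = 2*β*L + δ := ⟨_, rfl⟩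
      have hD0 : 0 < D := by
        have := mul_nonneg hβ.le hL0
        rw [hD]; linarith
      obtain ⟨γ₀, hγ₀⟩ : ∃ x : ℝ, x = L / D := ⟨_, rfl⟩
      have hγ₀0 : 0 ≤ γ₀ := by rw [hγ₀]; exact div_nonneg hL0 hD0.le
      have hγ₀γ : γ₀ ≤ γ := by
        rw [hγ₀, hγeq, hD]
        exact div_le_div₀ hℓ0 (by rw [hLdef]; linarith) hGδ (by rw [hLdef]; linarith)
      obtain ⟨X, hX⟩ : ∃ X : ℝ, X = L + 2*sL*sP := ⟨_, rfl⟩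
      have hX0 : 0 ≤ X := by
        have := mul_nonneg hsL0 hsP0
        rw [hX]; linarith
      have hCORE : (η - 2*γ₀)*X ≤ γ₀*L + η*δ/(2*β) := by
        rw [hγ₀, hD, hX]
        exact alig_CORE hβ hδ0 hδε hη0 hηβ hL0 hsL0 hsP0 hsL2 hsP2
      have hA4 : (η - 2*γ)*X ≤ γ*ℓv + η*δ/(2*β) := by
        have l1 : (η - 2*γ)*X ≤ (η - 2*γ₀)*X :=
          mul_le_mul_of_nonneg_right (by linarith) hX0
        have l2a : γ₀*L ≤ γ*L := mul_le_mul_of_nonneg_right hγ₀γ hL0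
        have l2b : γ*L ≤ γ*ℓv :=
          mul_le_mul_of_nonneg_left (by rw [hLdef]; linarith) hγ0
        linarith [hCORE, l1, l2a, l2b]
      have hm' : e - Ev = m := by rw [hEdef]; ring
      have hA3 : (η - 2*γ)*Ev + 2*γ*e ≤ η*ε := by
        have q1 : (η - 2*γ)*Ev + 2*γ*e = η*Ev + 2*γ*m := by
          linear_combination (2*γ)*hm'
        have q2 : 2*γ*m ≤ η*m := mul_le_mul_of_nonneg_right (by linarith) hm0
        have q3 : η*Ev ≤ η*(ε - m) :=
          mul_le_mul_of_nonneg_left (by rw [hEdef]; linarith) hη0.le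
        linarith [q1.le, q1.ge, q2, q3]
      have hrle' : α/2*r ≤ L + Ev + 2*(sL*sE) := by
        rw [hsLdef, hsEdef, hLdef, hEdef]; linarith [hrle]
      have hA1 : α*(η/2 - γ)*r ≤ (η - 2*γ)*(L + Ev + 2*(sL*sE)) := by
        have q4 : α*(η/2 - γ)*r = (η - 2*γ)*(α/2*r) := by ring
        rw [q4]
        exact mul_le_mul_of_nonneg_left hrle' (by linarith)
      have hA2 : (η - 2*γ)*(L + Ev + 2*(sL*sE)) ≤ (η - 2*γ)*X + (η - 2*γ)*Ev := by
        have l3 : sL*sE ≤ sL*sP := mul_le_mul_of_nonneg_left hsEsP hsL0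
        have l4 : (η-2*γ)*(2*(sL*sE)) ≤ (η-2*γ)*(2*(sL*sP)) :=
          mul_le_mul_of_nonneg_left (by linarith) (by linarith)
        have r1 : (η-2*γ)*(L+Ev+2*(sL*sE))
            = (η-2*γ)*L + (η-2*γ)*Ev + (η-2*γ)*(2*(sL*sE)) := by ring
        have r2 : (η-2*γ)*X = (η-2*γ)*L + (η-2*γ)*(2*(sL*sP)) := by rw [hX]; ring
        linarith [l4, r1.le, r1.ge, r2.le, r2.ge]
      have rr : (1-α*γ)*r - (1-α*η/2)*r = α*(η/2-γ)*r := by ring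
      linarith [hA1, hA2, hA3, hA4, rr.le, rr.ge]
  linarith [key2, main]

section Aux4
variable {E : Type*} [NormedAddCommGroup E] [InnerProductSpace ℝ E] [CompleteSpace E]
  [ProperSpace E]

/-- A strongly convex differentiable function attains its minimum. -/
lemma alig_exists_min {φ : E → ℝ} {g : E → E} {α : ℝ} (hα : 0 < α)
    (hgrad : ∀ x, HasGradientAt φ (g x) x)
    (hstrong : ∀ u w, φ u ≥ φ w + ⟪g w, u - w⟫ + α/2*‖u - w‖^2) :
    ∃ x₀, ∀ y, φ x₀ ≤ φ y := by
  have hcont : Continuous φ := by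
    rw [continuous_iff_continuousAt]
    exact fun x => (hgrad x).hasFDerivAt.differentiableAt.continuousAt
  set c : ℝ := ‖g 0‖ with hc
  have hlow : ∀ u : E, φ 0 - c*‖u‖ + α/2*‖u‖^2 ≤ φ u := by
    intro u
    have h1 := hstrong u 0
    simp only [sub_zero] at h1
    have h2 : -(c*‖u‖) ≤ ⟪g 0, u⟫ := by
      have := abs_real_inner_le_norm (g 0) u
      rw [abs_le] at this
      linarith [this.1]
    linarith
  have hψ : Tendsto (fun t : ℝ => φ 0 - c*t + α/2*t^2) atTop atTop := by
    apply tendsto_atTop_mono' atTop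
      (show (fun t : ℝ => t + φ 0) ≤ᶠ[atTop] fun t : ℝ => φ 0 - c*t + α/2*t^2 from ?_)
      (tendsto_atTop_add_const_right atTop (φ 0) tendsto_id)
    filter_upwards [eventually_ge_atTop ((2*(c+1))/α), eventually_ge_atTop (0:ℝ)]
      with t ht1 ht2
    have h3 : 2*(c+1) ≤ α*t := by
      rw [div_le_iff₀ hα] at ht1
      linarith [ht1]
    nlinarith [h3, ht2]
  have hlim : Tendsto φ (cocompact E) atTop := by
    apply tendsto_atTop_mono' (cocompact E)
      (show (fun u : E => φ 0 - c*‖u‖ + α/2*‖u‖^2) ≤ᶠ[cocompact E] φ from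
        Eventually.of_forall hlow)
    exact hψ.comp tendsto_norm_cocompact_atTop
  exact hcont.exists_forall_le hlim

end Aux4

/-- Scalar helper: `(α/2)(a+b)² ≤ L + E + 2√L√E` when `(α/2)a² ≤ L`, `(α/2)b² ≤ E`. -/
lemma alig_dist_bound {α a b L E : ℝ} (hα : 0 < α) (ha : 0 ≤ a) (hb : 0 ≤ b)
    (hL : α/2*a^2 ≤ L) (hE : α/2*b^2 ≤ E) :
    α/2*(a+b)^2 ≤ L + E + 2*Real.sqrt L*Real.sqrt E := by
  have hL0 : 0 ≤ L := le_trans (by positivity) hL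
  have hE0 : 0 ≤ E := le_trans (by positivity) hE
  obtain ⟨s2, hs2⟩ : ∃ x : ℝ, x = Real.sqrt (α/2) := ⟨_, rfl⟩
  have hs20 : 0 ≤ s2 := hs2 ▸ Real.sqrt_nonneg _
  have hs22 : s2^2 = α/2 := by rw [hs2]; exact Real.sq_sqrt (by positivity)
  obtain ⟨sL, hsL⟩ : ∃ x : ℝ, x = Real.sqrt L := ⟨_, rfl⟩
  obtain ⟨sE, hsE⟩ : ∃ x : ℝ, x = Real.sqrt E := ⟨_, rfl⟩
  have hsL0 : 0 ≤ sL := hsL ▸ Real.sqrt_nonneg _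
  have hsE0 : 0 ≤ sE := hsE ▸ Real.sqrt_nonneg _
  have hsL2 : sL^2 = L := by rw [hsL]; exact Real.sq_sqrt hL0
  have hsE2 : sE^2 = E := by rw [hsE]; exact Real.sq_sqrt hE0
  rw [← hsL, ← hsE]
  have h1 : s2*a ≤ sL := by
    have q1 : (s2*a)^2 ≤ sL^2 := by
      rw [hsL2, mul_pow, hs22]; exact hL
    exact le_of_pow_le_pow_left₀ two_ne_zero hsL0 q1
  have h2 : s2*b ≤ sE := by
    have q2 : (s2*b)^2 ≤ sE^2 := by
      rw [hsE2, mul_pow, hs22]; exact hE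
    exact le_of_pow_le_pow_left₀ two_ne_zero hsE0 q2
  have h3 : (s2*(a+b))^2 ≤ (sL + sE)^2 := by
    apply pow_le_pow_left₀ (by positivity)
    calc s2*(a+b) = s2*a + s2*b := by ring
      _ ≤ sL + sE := add_le_add h1 h2
  calc α/2*(a+b)^2 = (s2*(a+b))^2 := by rw [mul_pow, hs22]
    _ ≤ (sL + sE)^2 := h3
    _ = sL^2 + sE^2 + 2*sL*sE := by ring
    _ = L + E + 2*sL*sE := by rw [hsL2, hsE2]

set_option maxHeartbeats 1000000 in
/-- Linear convergence of ALI-G for α-strongly convex β-smooth losses with small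
maximal learning-rate 0 < η ≤ 1/(2β):
`E[f(w_{T+1})] - f⋆ ≤ β·exp(-αηT/2)·‖w₀ - w⋆‖² + δ/α + 4εβ/α`. -/
theorem alig_strongly_convex_smooth_small_eta
    {p : ℕ} {Z : Type*} [MeasurableSpace Z]
    (μ : Measure Z) [IsProbabilityMeasure μ]
    {S : Type*} [MeasurableSpace S] (P : Measure S) [IsProbabilityMeasure P]
    (z : ℕ → S → Z) (hz_meas : ∀ t, Measurable (z t))
    (hz_indep : iIndepFun z P)
    (hz_dist : ∀ t, P.map (z t) = μ)
    (ℓ : Z → EuclideanSpace ℝ (Fin p) → ℝ)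
    (g : Z → EuclideanSpace ℝ (Fin p) → EuclideanSpace ℝ (Fin p))
    (α β δ ε η : ℝ) (hα : 0 < α) (hβ : 0 < β) (hε : 0 ≤ ε) (hδ : 2 * β * ε < δ)
    (hη₁ : 0 < η) (hη₂ : η ≤ 1 / (2 * β))
    (hstrong : ∀ zi u w, ℓ zi u ≥ ℓ zi w + ⟪g zi w, u - w⟫ + (α / 2) * ‖u - w‖ ^ 2)
    (hsmooth : ∀ zi u v, ‖g zi u - g zi v‖ ≤ β * ‖u - v‖)
    (hgrad : ∀ zi w, HasGradientAt (ℓ zi) (g zi w) w)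
    (hnonneg : ∀ zi w, 0 ≤ ℓ zi w)
    (K : Set (EuclideanSpace ℝ (Fin p))) (hK : Convex ℝ K)
    (proj : EuclideanSpace ℝ (Fin p) → EuclideanSpace ℝ (Fin p))
    (hproj : ∀ x, proj x ∈ K ∧ ∀ y ∈ K, ‖x - proj x‖ ≤ ‖x - y‖)
    (wstar : EuclideanSpace ℝ (Fin p)) (hws : wstar ∈ K)
    (hinterp : ∀ zi, ℓ zi wstar ≤ ε)
    (f : EuclideanSpace ℝ (Fin p) → ℝ) (hf : ∀ w, f w = ∫ zi, ℓ zi w ∂μ)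
    (fstar : ℝ) (hfstar : IsGLB (f '' K) fstar)
    (w0 : EuclideanSpace ℝ (Fin p)) (hw0 : w0 ∈ K)
    (W : ℕ → S → EuclideanSpace ℝ (Fin p)) (hW0 : ∀ ω, W 0 ω = w0)
    (hrec : ∀ t ω, W (t + 1) ω = proj (W t ω -
      (min (ℓ (z t ω) (W t ω) / (‖g (z t ω) (W t ω)‖ ^ 2 + δ)) η) •
        g (z t ω) (W t ω)))
    (T : ℕ) :
    (∫ ω, f (W (T + 1) ω) ∂P) - fstar ≤
      β * Real.exp (-(α * η * (T : ℝ)) / 2) * ‖w0 - wstar‖ ^ 2 +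
        δ / α + 4 * ε * β / α := by
  have hδ0 : 0 < δ := lt_of_le_of_lt (by positivity) hδ
  have hδε : 2*β*ε ≤ δ := hδ.le
  have hβ2 : (0:ℝ) < 2*β := by linarith
  have hηβ : 2*β*η ≤ 1 := by
    rw [le_div_iff₀ hβ2] at hη₂; linarith
  -- f is nonnegative; fstar ≥ 0 situations handled in both branches
  have hf_nonneg : ∀ u, 0 ≤ f u := by
    intro u; rw [hf]; exact integral_nonneg (fun zi => hnonneg zi u)
  have hf_le : ∀ (u : EuclideanSpace ℝ (Fin p)) (C : ℝ), 0 ≤ C →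
      (∀ zi, ℓ zi u ≤ C) → f u ≤ C := by
    intro u C hC0 hC
    rw [hf]
    by_cases hI : Integrable (fun zi => ℓ zi u) μ
    · calc ∫ zi, ℓ zi u ∂μ ≤ ∫ _, C ∂μ := integral_mono hI (integrable_const C) hC
        _ = C := by simp
    · rw [integral_undef hI]; exact hC0
  rcases subsingleton_or_nontrivial (EuclideanSpace ℝ (Fin p)) with hsub | hnt
  · -- subsingleton case
    have hW' : ∀ ω, W (T+1) ω = wstar := fun ω => Subsingleton.elim _ _
    have himg : f '' K = {f wstar} := by
      apply Set.eq_singleton_iff_nonempty_unique_mem.mpr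
      constructor
      · exact ⟨f wstar, ⟨wstar, hws, rfl⟩⟩
      · rintro x ⟨y, _, rfl⟩
        rw [Subsingleton.elim y wstar]
    have hfseq : fstar = f wstar := by
      rw [himg] at hfstar
      exact hfstar.unique isGLB_singleton
    have hintconst : (∫ ω, f (W (T + 1) ω) ∂P) = f wstar := by
      have : (fun ω => f (W (T + 1) ω)) = fun _ => f wstar := by
        funext ω; rw [hW' ω]
      rw [this, integral_const]
      simp
    rw [hintconst, hfseq, sub_self]
    have h1 : (0:ℝ) ≤ β * Real.exp (-(α * η * (T:ℝ)) / 2) * ‖w0 - wstar‖ ^ 2 := by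
      positivity
    have h2 : (0:ℝ) < δ / α := by positivity
    have h3 : (0:ℝ) ≤ 4 * ε * β / α := by positivity
    linarith
  · -- nontrivial case
    have hZne : Nonempty Z := by
      rcases isEmpty_or_nonempty Z with hZ | hZ
      · exfalso
        have h1 : μ Set.univ = 1 := measure_univ
        rw [Set.univ_eq_empty_iff.mpr hZ, measure_empty] at h1
        simp at h1
      · exact hZ
    have hαβ : α ≤ β := by
      obtain ⟨zi⟩ := hZne
      obtain ⟨v, hv⟩ := exists_ne (0 : EuclideanSpace ℝ (Fin p))
      have h1 := hstrong zi v 0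
      have h2 := hstrong zi 0 v
      simp only [sub_zero, zero_sub] at h1 h2
      have h3 : ⟪g zi v, -v⟫ = -⟪g zi v, v⟫ := by rw [inner_neg_right]
      have h4 : ‖(-v : EuclideanSpace ℝ (Fin p))‖ = ‖v‖ := norm_neg v
      rw [h3, h4] at h2
      have h5 : ⟪g zi v - g zi 0, v⟫ ≥ α*‖v‖^2 := by
        rw [inner_sub_left]; linarith
      have h6 : ⟪g zi v - g zi 0, v⟫ ≤ β*‖v‖^2 := by
        calc ⟪g zi v - g zi 0, v⟫ ≤ ‖g zi v - g zi 0‖*‖v‖ := real_inner_le_norm _ _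
          _ ≤ (β*‖v - 0‖)*‖v‖ := mul_le_mul_of_nonneg_right (hsmooth zi v 0) (norm_nonneg v)
          _ = β*‖v‖^2 := by rw [sub_zero]; ring
      have h7 : 0 < ‖v‖^2 := pow_pos (norm_pos_iff.mpr hv) 2
      nlinarith [h5, h6, h7]
    -- descent lemma instantiation
    have hdes : ∀ zi u v, ℓ zi u ≤ ℓ zi v + ⟪g zi v, u - v⟫ + β/2*‖u - v‖^2 :=
      fun zi u v => alig_descent hβ (hgrad zi) (hsmooth zi) u v
    -- minimizers of each loss
    have hmin : ∀ zi : Z, ∃ x₀, ∀ y, ℓ zi x₀ ≤ ℓ zi y :=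
      fun zi => alig_exists_min hα (hgrad zi) (hstrong zi)
    choose x₀ hx₀ using hmin
    -- gradient-norm bound: ‖g zi x‖² ≤ 2β(ℓ zi x - m zi)
    have hkey : ∀ zi x, ‖g zi x‖^2 ≤ 2*β*(ℓ zi x - ℓ zi (x₀ zi)) := by
      intro zi x
      have h1 := hx₀ zi (x - (1/β) • (g zi x))
      have h2 := hdes zi (x - (1/β) • (g zi x)) x
      have h3 : (x - (1/β) • (g zi x)) - x = -((1/β) • (g zi x)) := by abel
      rw [h3] at h2
      rw [inner_neg_right, real_inner_smul_right, real_inner_self_eq_norm_sq] at h2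
      have h4 : ‖-((1/β) • (g zi x))‖ = (1/β) * ‖g zi x‖ := by
        rw [norm_neg, norm_smul, Real.norm_eq_abs, abs_of_pos (by positivity : (0:ℝ) < 1/β)]
      rw [h4] at h2
      have h5 : β/2*((1/β)*‖g zi x‖)^2 = ‖g zi x‖^2/(2*β) := by
        field_simp
      rw [h5] at h2
      have h6 : ℓ zi (x₀ zi) ≤ ℓ zi x - (1/β)*‖g zi x‖^2 + ‖g zi x‖^2/(2*β) :=
        le_trans h1 h2
      have h7 : (1/β)*‖g zi x‖^2 - ‖g zi x‖^2/(2*β) = ‖g zi x‖^2/(2*β) := by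
        field_simp; ring
      have h8 : ℓ zi (x₀ zi) ≤ ℓ zi x - ‖g zi x‖^2/(2*β) := by linarith [h7.le, h7.ge]
      have h9 : ‖g zi x‖^2/(2*β) ≤ ℓ zi x - ℓ zi (x₀ zi) := by linarith
      rw [div_le_iff₀ hβ2] at h9
      linarith [h9]
    -- gradient vanishes at the minimizer
    have hgx₀ : ∀ zi, g zi (x₀ zi) = 0 := by
      intro zi
      have h1 := hkey zi (x₀ zi)
      simp only [sub_self, mul_zero] at h1
      have h2 : ‖g zi (x₀ zi)‖^2 = 0 := le_antisymm h1 (by positivity)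
      have h3 : ‖g zi (x₀ zi)‖ = 0 := by
        exact pow_eq_zero_iff two_ne_zero |>.mp h2
      exact norm_eq_zero.mp h3
    -- distance bound from strong convexity at the minimizer
    have hdist : ∀ zi x, α/2*‖x - x₀ zi‖^2 ≤ ℓ zi x - ℓ zi (x₀ zi) := by
      intro zi x
      have h1 := hstrong zi x (x₀ zi)
      rw [hgx₀ zi, inner_zero_left] at h1
      linarith
    -- one-step recursion, pathwise
    obtain ⟨q, hq⟩ : ∃ q : ℝ, q = α*η/2 := ⟨_, rfl⟩
    obtain ⟨c, hc⟩ : ∃ c : ℝ, c = η*δ/(2*β) + η*ε := ⟨_, rfl⟩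
    have hq0 : 0 < q := by rw [hq]; positivity
    have hq1 : q ≤ 1/4 := by
      rw [hq]
      nlinarith [mul_le_mul_of_nonneg_right hαβ hη₁.le]
    have hc0 : 0 ≤ c := by rw [hc]; positivity
    have hstep : ∀ t ω, ‖W (t+1) ω - wstar‖^2 ≤ (1 - q)*‖W t ω - wstar‖^2 + c := by
      intro t ω
      obtain ⟨zi, hzi⟩ : ∃ zi : Z, zi = z t ω := ⟨_, rfl⟩
      obtain ⟨w, hw⟩ : ∃ w, w = W t ω := ⟨_, rfl⟩
      obtain ⟨γ, hγ⟩ : ∃ γ : ℝ, γ = min (ℓ zi w/(‖g zi w‖^2 + δ)) η := ⟨_, rfl⟩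
      have hrec' : W (t+1) ω = proj (w - γ • g zi w) := by
        rw [hrec t ω, ← hzi, ← hw, ← hγ]
      -- projection is nonexpansive towards wstar ∈ K
      have hproj1 : ‖W (t+1) ω - wstar‖ ≤ ‖(w - γ • g zi w) - wstar‖ := by
        rw [hrec']
        exact alig_proj_aux hK (hproj _).1 hws (hproj _).2
      have hproj2 : ‖W (t+1) ω - wstar‖^2 ≤ ‖(w - γ • g zi w) - wstar‖^2 :=
        pow_le_pow_left₀ (norm_nonneg _) hproj1 2
      -- expand the squared norm
      have hre : (w - γ • g zi w) - wstar = (w - wstar) - γ • g zi w := by abel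
      have hexp : ‖(w - γ • g zi w) - wstar‖^2
          = ‖w - wstar‖^2 - 2*(γ*⟪g zi w, w - wstar⟫) + γ^2*‖g zi w‖^2 := by
        rw [hre, norm_sub_sq_real, real_inner_smul_right, norm_smul, mul_pow,
          Real.norm_eq_abs, sq_abs, real_inner_comm]
      -- distance bound hypothesis
      have hrle2 : α/2*‖w - wstar‖^2 ≤ (ℓ zi w - ℓ zi (x₀ zi)) + (ℓ zi wstar - ℓ zi (x₀ zi))
          + 2*Real.sqrt (ℓ zi w - ℓ zi (x₀ zi))*Real.sqrt (ℓ zi wstar - ℓ zi (x₀ zi)) := by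
        have h1 : ‖w - wstar‖ ≤ ‖w - x₀ zi‖ + ‖x₀ zi - wstar‖ :=
          norm_sub_le_norm_sub_add_norm_sub w (x₀ zi) wstar
        have h2 : α/2*‖w - wstar‖^2 ≤ α/2*(‖w - x₀ zi‖ + ‖x₀ zi - wstar‖)^2 := by
          apply mul_le_mul_of_nonneg_left _ (by positivity)
          exact pow_le_pow_left₀ (norm_nonneg _) h1 2
        have hE' : α/2*‖x₀ zi - wstar‖^2 ≤ ℓ zi wstar - ℓ zi (x₀ zi) := by
          have h := hdist zi wstar
          rw [show wstar - x₀ zi = -(x₀ zi - wstar) by abel, norm_neg] at h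
          exact h
        have h3 := alig_dist_bound hα (norm_nonneg (w - x₀ zi))
          (norm_nonneg (x₀ zi - wstar)) (hdist zi w) hE'
        linarith [h2, h3]
      -- strong convexity at wstar
      have hs2 : ℓ zi w - ℓ zi wstar + α/2*‖w - wstar‖^2 ≤ ⟪g zi w, w - wstar⟫ := by
        have h1 := hstrong zi wstar w
        have h2 : ⟪g zi w, wstar - w⟫ = -⟪g zi w, w - wstar⟫ := by
          rw [show wstar - w = -(w - wstar) by abel, inner_neg_right]
        have h3 : ‖wstar - w‖ = ‖w - wstar‖ := norm_sub_rev _ _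
        rw [h2, h3] at h1
        linarith
      -- apply the scalar step lemma
      have hscal := alig_step_scalar α β δ ε η (‖w - wstar‖^2) (ℓ zi w) (ℓ zi wstar)
        (ℓ zi (x₀ zi)) (‖g zi w‖^2) (⟪g zi w, w - wstar⟫) γ
        hα hβ hε hδε hδ0 hη₁ hηβ
        (hnonneg zi _) (hx₀ zi wstar) (hinterp zi) (hx₀ zi w)
        (by positivity) (hkey zi w) (by positivity)
        hrle2 hs2 hγ
      have goal1 : ‖W (t+1) ω - wstar‖^2
          ≤ (1 - α*η/2)*‖w - wstar‖^2 + η*δ/(2*β) + η*ε := by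
        rw [hexp] at hproj2
        calc ‖W (t+1) ω - wstar‖^2
            ≤ ‖w - wstar‖^2 - 2*(γ*⟪g zi w, w - wstar⟫) + γ^2*‖g zi w‖^2 := hproj2
          _ = ‖w - wstar‖^2 - 2*γ*⟪g zi w, w - wstar⟫ + γ^2*‖g zi w‖^2 := by ring
          _ ≤ (1 - α*η/2)*‖w - wstar‖^2 + η*δ/(2*β) + η*ε := hscal
      rw [hq, hc, ← hw]
      calc ‖W (t+1) ω - wstar‖^2
          ≤ (1 - α*η/2)*‖w - wstar‖^2 + η*δ/(2*β) + η*ε := goal1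
        _ = (1 - α*η/2)*‖w - wstar‖^2 + (η*δ/(2*β) + η*ε) := by ring
    -- iterate the recursion
    have hiter : ∀ t ω, ‖W t ω - wstar‖^2 ≤ (1-q)^t * ‖w0 - wstar‖^2 + c/q := by
      intro t
      induction t with
      | zero =>
        intro ω
        rw [hW0]
        have : (0:ℝ) ≤ c/q := by positivity
        simp only [pow_zero, one_mul]
        linarith
      | succ n ih =>
        intro ω
        have h1 := hstep n ω
        have h2 := ih ω
        have h3 : (1-q)*‖W n ω - wstar‖^2 ≤ (1-q)*((1-q)^n * ‖w0 - wstar‖^2 + c/q) :=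
          mul_le_mul_of_nonneg_left h2 (by linarith)
        have h4 : (1-q)*((1-q)^n * ‖w0 - wstar‖^2 + c/q) + c
            = (1-q)^(n+1) * ‖w0 - wstar‖^2 + c/q := by
          have : (1-q)*(c/q) + c = c/q := by
            field_simp
            ring
          calc (1-q)*((1-q)^n * ‖w0 - wstar‖^2 + c/q) + c
              = (1-q)^(n+1) * ‖w0 - wstar‖^2 + ((1-q)*(c/q) + c) := by ring
            _ = (1-q)^(n+1) * ‖w0 - wstar‖^2 + c/q := by rw [this]
        linarith [h1, h3, h4.le, h4.ge]
    -- exponential bound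
    have hexpb : (1-q)^(T+1) ≤ Real.exp (-(α*η*(T:ℝ))/2) := by
      have h1 : (1-q)^(T+1) ≤ (1-q)^T :=
        pow_le_pow_of_le_one (by linarith) (by linarith) (Nat.le_succ T)
      have h2 : (1-q) ≤ Real.exp (-q) := by
        linarith [Real.add_one_le_exp (-q)]
      have h3 : (1-q)^T ≤ (Real.exp (-q))^T :=
        pow_le_pow_left₀ (by linarith) h2 T
      have h4 : (Real.exp (-q))^T = Real.exp (-(α*η*(T:ℝ))/2) := by
        rw [← Real.exp_nat_mul]
        congr 1
        rw [hq]; ring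
      rw [h4] at h3
      linarith
    -- pointwise loss bound
    have hgw : ∀ zi, ‖g zi wstar‖^2 ≤ 2*β*ε := by
      intro zi
      calc ‖g zi wstar‖^2 ≤ 2*β*(ℓ zi wstar - ℓ zi (x₀ zi)) := hkey zi wstar
        _ ≤ 2*β*ε := by
          apply mul_le_mul_of_nonneg_left _ hβ2.le
          linarith [hinterp zi, hnonneg zi (x₀ zi)]
    have hptw : ∀ zi u, ℓ zi u ≤ β*‖u - wstar‖^2 + 2*ε := by
      intro zi u
      have h1 := hdes zi u wstar
      have h2 : ⟪g zi wstar, u - wstar⟫ ≤ ‖g zi wstar‖*‖u - wstar‖ :=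
        real_inner_le_norm _ _
      have h3 : ‖g zi wstar‖*‖u - wstar‖ ≤ ε + β/2*‖u - wstar‖^2 := by
        nlinarith [sq_nonneg (‖g zi wstar‖ - β*‖u - wstar‖), hgw zi, hβ,
          norm_nonneg (g zi wstar), norm_nonneg (u - wstar)]
      linarith [hinterp zi, h1, h2, h3]
    -- integrate the bound
    obtain ⟨R, hR⟩ : ∃ R : ℝ, R = (1-q)^(T+1) * ‖w0 - wstar‖^2 + c/q := ⟨_, rfl⟩
    have hR0 : 0 ≤ R := by
      rw [hR]
      have h1 : (0:ℝ) ≤ (1-q)^(T+1) := pow_nonneg (by linarith) _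
      positivity
    have hbound : ∀ ω, f (W (T+1) ω) ≤ β*R + 2*ε := by
      intro ω
      apply hf_le _ _ (by positivity)
      intro zi
      have h1 := hptw zi (W (T+1) ω)
      have h2 : ‖W (T+1) ω - wstar‖^2 ≤ R := hR ▸ hiter (T+1) ω
      nlinarith [h1, h2, hβ]
    have hint2 : (∫ ω, f (W (T+1) ω) ∂P) ≤ β*R + 2*ε := by
      by_cases hI : Integrable (fun ω => f (W (T+1) ω)) P
      · calc (∫ ω, f (W (T+1) ω) ∂P) ≤ ∫ _, β*R + 2*ε ∂P :=
            integral_mono hI (integrable_const _) hbound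
          _ = β*R + 2*ε := by simp
      · rw [integral_undef hI]; positivity
    -- fstar ≥ 0
    have hfstar0 : 0 ≤ fstar := by
      apply hfstar.2
      rintro x ⟨y, _, rfl⟩
      exact hf_nonneg y
    -- final arithmetic
    have hcq : c/q = δ/(α*β) + 2*ε/α := by
      rw [hc, hq]
      field_simp
    have hfin1 : β*R ≤ β*Real.exp (-(α*η*(T:ℝ))/2) * ‖w0 - wstar‖^2
        + δ/α + 2*β*ε/α := by
      have h1 : β*((1-q)^(T+1) * ‖w0 - wstar‖^2)
          ≤ β*(Real.exp (-(α*η*(T:ℝ))/2) * ‖w0 - wstar‖^2) := by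
        apply mul_le_mul_of_nonneg_left _ hβ.le
        exact mul_le_mul_of_nonneg_right hexpb (by positivity)
      have h2 : β*(c/q) = δ/α + 2*β*ε/α := by
        rw [hcq]
        field_simp
      calc β*R = β*((1-q)^(T+1) * ‖w0 - wstar‖^2) + β*(c/q) := by rw [hR]; ring
        _ ≤ β*(Real.exp (-(α*η*(T:ℝ))/2) * ‖w0 - wstar‖^2) + (δ/α + 2*β*ε/α) := by
            rw [h2] at *; linarith [h1]
        _ = β*Real.exp (-(α*η*(T:ℝ))/2) * ‖w0 - wstar‖^2 + δ/α + 2*β*ε/α := by ring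
    have hfin2 : 2*ε ≤ 2*β*ε/α := by
      rw [le_div_iff₀ hα]
      nlinarith [mul_le_mul_of_nonneg_left hαβ hε]
    have hfin3 : 2*β*ε/α + 2*β*ε/α = 4*ε*β/α := by ring
    linarith [hint2, hfstar0, hfin1, hfin2]
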